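/- Let k be a positive integer and let M be the k×k matrix whose (i,j) entry, for 1 ≤ i, j ≤ k, is the binomial coefficient C(2k−i, j−1). Then det M = (−1)^{k(k−1)/2}. -/

import Mathlib

open Equiv Finset Matrix

private lemma sign_revPerm :
    ∀ n : ℕ, Equiv.Perm.sign (Fin.revPerm : Equiv.Perm (Fin n)) = (-1) ^ (n * (n - 1) / 2)
  | 0 => by decide
  | (n + 1) => by
    have hdecomp : (Fin.revPerm : Equiv.Perm (Fin (n + 1))) =
        finRotate (n + 1) *
          (finSuccEquivLast.symm.permCongr
            (Fin.revPerm : Equiv.Perm (Fin n)).optionCongr) := by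
      ext i
      refine Fin.lastCases ?_ (fun j => ?_) i
      · simp [Equiv.Perm.mul_apply, Equiv.permCongr_apply, Fin.rev_last, finRotate_last]
      · simp [Equiv.Perm.mul_apply, Equiv.permCongr_apply, Fin.rev_castSucc,
          finRotate_succ_apply, Fin.coeSucc_eq_succ]
    rw [hdecomp, _root_.map_mul, sign_finRotate, Equiv.Perm.sign_permCongr, Equiv.optionCongr_sign,
      sign_revPerm n, ← pow_add]
    congr 1
    have h2 : (n + 1) * (n + 1 - 1) = n * (n - 1) + 2 * n := by
      cases n <;> simp <;> ring
    rw [h2, Nat.add_mul_div_left _ _ (by norm_num : (0:ℕ) < 2), Nat.add_comm]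
    omega

private lemma det_pascal_aux (k : ℕ) :
    Matrix.det (Matrix.of fun i j : Fin k =>
        ((Nat.choose (k + (i : ℕ)) (j : ℕ) : ℤ))) = 1 := by
  set A : Matrix (Fin k) (Fin k) ℤ := Matrix.of fun i m => ((Nat.choose i m : ℤ)) with hA
  set B : Matrix (Fin k) (Fin k) ℤ := Matrix.of fun m j =>
    if (m : ℕ) ≤ (j : ℕ) then ((Nat.choose k ((j : ℕ) - (m : ℕ)) : ℤ)) else 0 with hB
  have hAB : (Matrix.of fun i j : Fin k => ((Nat.choose (k + (i : ℕ)) (j : ℕ) : ℤ))) = A * B := by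
    funext i j
    simp only [Matrix.mul_apply, hA, hB, Matrix.of_apply]
    rw [Fin.sum_univ_eq_sum_range
      (fun m => ((Nat.choose i m : ℤ)) * if m ≤ (j : ℕ) then ((Nat.choose k ((j : ℕ) - m) : ℤ)) else 0)]
    have hsub : Finset.range ((j : ℕ) + 1) ⊆ Finset.range k := by
      intro x hx
      simp only [Finset.mem_range] at *
      omega
    rw [← Finset.sum_subset hsub (by
      intro x hx hx'
      simp only [Finset.mem_range] at hx hx'
      rw [if_neg (by omega), mul_zero])]
    have := Nat.add_choose_eq (i : ℕ) k (j : ℕ)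
    rw [Nat.add_comm (i : ℕ) k] at this
    rw [Finset.Nat.sum_antidiagonal_eq_sum_range_succ_mk] at this
    have : ((Nat.choose (k + (i : ℕ)) (j : ℕ) : ℤ))
        = ∑ m ∈ Finset.range ((j : ℕ) + 1), ((Nat.choose (i : ℕ) m : ℤ)) * (Nat.choose k ((j : ℕ) - m) : ℤ) := by
      exact_mod_cast congrArg (Nat.cast : ℕ → ℤ) this
    rw [this]
    refine Finset.sum_congr rfl fun m hm => ?_
    simp only [Finset.mem_range] at hm
    rw [if_pos (by omega)]
  rw [hAB, Matrix.det_mul]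
  have hdetA : A.det = 1 := by
    rw [Matrix.det_of_lowerTriangular A (by
      intro i j hij
      simp only [OrderDual.toDual_lt_toDual] at hij
      simp [hA, Nat.choose_eq_zero_of_lt (by exact_mod_cast hij)])]
    simp [hA]
  have hdetB : B.det = 1 := by
    rw [Matrix.det_of_upperTriangular (M := B) (by
      intro i j hij
      simp only [id_eq] at hij
      simp only [hB, Matrix.of_apply]
      rw [if_neg (Nat.not_le.mpr (Fin.lt_def.mp hij))])]
    simp [hB]
  rw [hdetA, hdetB, one_mul]

/-- **Binomial determinant evaluation:** the `k×k` matrix with `(i,j)` entry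
`C(2k−i, j−1)` (for `1 ≤ i,j ≤ k`) has determinant `(−1)^{k(k−1)/2}`. -/
theorem binomial_matrix_det (k : ℕ) (hk : 0 < k) :
    Matrix.det (Matrix.of fun i j : Fin k =>
        ((Nat.choose (2 * k - 1 - (i : ℕ)) (j : ℕ) : ℤ)))
      = (-1) ^ (k * (k - 1) / 2) := by
  have hrw : (Matrix.of fun i j : Fin k =>
      ((Nat.choose (2 * k - 1 - (i : ℕ)) (j : ℕ) : ℤ)))
      = (Matrix.of fun i j : Fin k =>
          ((Nat.choose (k + (i : ℕ)) (j : ℕ) : ℤ))).submatrix Fin.revPerm id := by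
    funext i j
    have hi : (i : ℕ) < k := i.isLt
    have hv : ((Fin.revPerm i : Fin k) : ℕ) = k - 1 - (i : ℕ) := by
      simp [Fin.revPerm, Fin.val_rev]
      omega
    have harg : 2 * k - 1 - (i : ℕ) = k + ((Fin.revPerm i : Fin k) : ℕ) := by
      rw [hv]; omega
    simp only [Matrix.of_apply, Matrix.submatrix_apply, id, harg]
  rw [hrw, Matrix.det_permute, det_pascal_aux, mul_one, sign_revPerm]
  simp
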